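/- As n → ∞ with a ~ c√n for a fixed constant c > 0 and b = n − 2a, the sum-Balaban index of the balanced dumbbell graph D_{a,b} is bounded above and below by positive constants independent of n (i.e., SJ(D_{a,b}) ∈ Θ(1)). -/

import Mathlib

open Finset

noncomputable def transmission {V : Type*} [Fintype V] (G : SimpleGraph V) (v : V) : ℕ :=
  ∑ x, G.dist v x

noncomputable def edgeTerm {V : Type*} [Fintype V] (G : SimpleGraph V) : Sym2 V → ℝ :=
  Sym2.lift ⟨fun u v => 1 / Real.sqrt ((transmission G u : ℝ) + transmission G v),
    by intro u v; simp [add_comm]⟩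

noncomputable def sumBalaban {V : Type*} [Fintype V] [DecidableEq V]
    (G : SimpleGraph V) [DecidableRel G.Adj] : ℝ :=
  ((G.edgeFinset.card : ℝ) / ((G.edgeFinset.card : ℝ) - (Fintype.card V : ℝ) + 2)) *
    ∑ e ∈ G.edgeFinset, edgeTerm G e

def dumbbell (a b a' : ℕ) : SimpleGraph ((Fin a ⊕ Fin b) ⊕ Fin a') :=
  SimpleGraph.fromRel (fun x y =>
    match x, y with
    | .inl (.inl _), .inl (.inl _) => True
    | .inr _, .inr _ => True
    | .inl (.inr i), .inl (.inr j) => (i : ℕ) + 1 = (j : ℕ)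
    | .inl (.inl _), .inl (.inr i) => (i : ℕ) = 0
    | .inl (.inr i), .inr _ => (i : ℕ) = b - 1
    | _, _ => False)

noncomputable instance (a b a' : ℕ) : DecidableRel (dumbbell a b a').Adj :=
  Classical.decRel _


namespace DB

variable {a b : ℕ}

lemma adj_ll {x y : Fin a} : (dumbbell a b a).Adj (.inl (.inl x)) (.inl (.inl y)) ↔ x ≠ y := by
  simp [dumbbell, SimpleGraph.fromRel_adj]

lemma adj_lp {x : Fin a} {j : Fin b} :
    (dumbbell a b a).Adj (.inl (.inl x)) (.inl (.inr j)) ↔ (j:ℕ) = 0 := by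
  simp [dumbbell, SimpleGraph.fromRel_adj]

lemma adj_pp {i j : Fin b} :
    (dumbbell a b a).Adj (.inl (.inr i)) (.inl (.inr j)) ↔ ((i:ℕ)+1 = j ∨ (j:ℕ)+1 = i) := by
  simp [dumbbell, SimpleGraph.fromRel_adj, Fin.ext_iff]
  omega

lemma adj_pr {i : Fin b} {y : Fin a} :
    (dumbbell a b a).Adj (.inl (.inr i)) (.inr y) ↔ (i:ℕ) = b-1 := by
  simp [dumbbell, SimpleGraph.fromRel_adj]

lemma not_adj_lr {x : Fin a} {y : Fin a} : ¬ (dumbbell a b a).Adj (.inl (.inl x)) (.inr y) := by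
  simp [dumbbell, SimpleGraph.fromRel_adj]

lemma adj_rr {x y : Fin a} : (dumbbell a b a).Adj (.inr x) (.inr y) ↔ x ≠ y := by
  simp [dumbbell, SimpleGraph.fromRel_adj]

lemma exists_walk_path (hb : 0 < b) :
    ∀ k, (hk : k < b) → ∃ w : (dumbbell a b a).Walk (.inl (.inr ⟨k,hk⟩)) (.inl (.inr ⟨0,hb⟩)),
      w.length ≤ k
  | 0, hk => ⟨SimpleGraph.Walk.nil, by simp⟩
  | (k+1), hk => by
    obtain ⟨w, hw⟩ := exists_walk_path hb k (Nat.lt_of_succ_lt hk)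
    refine ⟨SimpleGraph.Walk.cons (adj_pp.mpr (Or.inr rfl)) w, ?_⟩
    simpa using Nat.succ_le_succ hw

lemma exists_walk_to_p0 (hb : 0 < b) (v : (Fin a ⊕ Fin b) ⊕ Fin a) :
    ∃ w : (dumbbell a b a).Walk v (.inl (.inr ⟨0,hb⟩)), w.length ≤ b := by
  obtain (x|i)|y := v
  · exact ⟨SimpleGraph.Walk.cons (adj_lp.mpr rfl) SimpleGraph.Walk.nil, by simpa using Nat.succ_le_of_lt hb⟩
  · obtain ⟨w, hw⟩ := exists_walk_path (a := a) hb i.1 i.2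
    exact ⟨w, by omega⟩
  · obtain ⟨w, hw⟩ := exists_walk_path (a := a) hb (b-1) (by omega)
    refine ⟨SimpleGraph.Walk.cons ((dumbbell a b a).adj_symm (adj_pr.mpr rfl)) w, ?_⟩
    simp only [SimpleGraph.Walk.length_cons]
    omega

lemma reachable (hb : 0 < b) (u v : (Fin a ⊕ Fin b) ⊕ Fin a) :
    (dumbbell a b a).Reachable u v := by
  obtain ⟨w1, -⟩ := exists_walk_to_p0 (a := a) hb u
  obtain ⟨w2, -⟩ := exists_walk_to_p0 (a := a) hb v
  exact ⟨w1.append w2.reverse⟩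

lemma dist_le_all (hb : 0 < b) (u v : (Fin a ⊕ Fin b) ⊕ Fin a) :
    (dumbbell a b a).dist u v ≤ 2*b := by
  obtain ⟨w1, h1⟩ := exists_walk_to_p0 (a := a) hb u
  obtain ⟨w2, h2⟩ := exists_walk_to_p0 (a := a) hb v
  refine le_trans (SimpleGraph.dist_le (w1.append w2.reverse)) ?_
  rw [SimpleGraph.Walk.length_append, SimpleGraph.Walk.length_reverse]
  omega

def fV (a b : ℕ) : ((Fin a ⊕ Fin b) ⊕ Fin a) → ℤ
  | .inl (.inl _) => 0
  | .inl (.inr i) => (i:ℕ) + 1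
  | .inr _ => (b:ℤ) + 1

lemma f_adj {x y : (Fin a ⊕ Fin b) ⊕ Fin a} (hxy : (dumbbell a b a).Adj x y) :
    (fV a b x - fV a b y).natAbs ≤ 1 := by
  obtain (x|i)|x := x <;> obtain (y|j)|y := y <;>
    simp only [fV] <;>
    first
    | omega
    | (rw [adj_ll] at hxy; omega)
    | (rw [adj_lp] at hxy; omega)
    | (rw [adj_pp] at hxy; omega)
    | (rw [adj_pr] at hxy; have := i.2; omega)
    | (exact absurd hxy not_adj_lr)
    | (rw [(dumbbell a b a).adj_comm] at hxy;
       first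
       | (rw [adj_lp] at hxy; omega)
       | (rw [adj_pr] at hxy; have := j.2; omega)
       | (exact absurd hxy not_adj_lr))

lemma f_walk {u v : (Fin a ⊕ Fin b) ⊕ Fin a} (w : (dumbbell a b a).Walk u v) :
    (fV a b u - fV a b v).natAbs ≤ w.length := by
  induction w with
  | nil => simp
  | cons h p ih =>
    have := f_adj h
    rw [SimpleGraph.Walk.length_cons]
    omega

lemma f_dist (hb : 0 < b) (u v : (Fin a ⊕ Fin b) ⊕ Fin a) :
    (fV a b u - fV a b v).natAbs ≤ (dumbbell a b a).dist u v := by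
  obtain ⟨w, hw⟩ := (reachable hb u v).exists_walk_length_eq_dist
  exact hw ▸ f_walk w


lemma card_V (a b : ℕ) : Fintype.card ((Fin a ⊕ Fin b) ⊕ Fin a) = 2*a + b := by
  simp [Fintype.card_sum]; ring

lemma arith (t : ℤ) (b : ℕ) :
    (b/4)*(b/4) ≤ ∑ j ∈ Finset.range b, (t - ((j:ℤ)+1)).natAbs := by
  set q := b/4 with hq
  by_cases h : 2*t ≤ (b:ℤ)
  · calc q*q = (Finset.Ico (b-q) b).card * q := by rw [Nat.card_Ico]; congr 1; omega
    _ ≤ ∑ j ∈ Finset.Ico (b-q) b, (t - ((j:ℤ)+1)).natAbs := by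
        rw [← smul_eq_mul]
        refine Finset.card_nsmul_le_sum _ _ _ (fun j hj => ?_)
        rw [Finset.mem_Ico] at hj
        omega
    _ ≤ _ := by
        refine Finset.sum_le_sum_of_subset (fun j hj => ?_)
        rw [Finset.mem_Ico] at hj
        rw [Finset.mem_range]
        omega
  · calc q*q = (Finset.range q).card * q := by rw [Finset.card_range]
    _ ≤ ∑ j ∈ Finset.range q, (t - ((j:ℤ)+1)).natAbs := by
        rw [← smul_eq_mul]
        refine Finset.card_nsmul_le_sum _ _ _ (fun j hj => ?_)
        rw [Finset.mem_range] at hj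
        omega
    _ ≤ _ := by
        refine Finset.sum_le_sum_of_subset (fun j hj => ?_)
        rw [Finset.mem_range] at hj ⊢
        omega


lemma transmission_le (hb : 0 < b) (v : (Fin a ⊕ Fin b) ⊕ Fin a) :
    transmission (dumbbell a b a) v ≤ (2*a+b) * (2*b) := by
  calc transmission (dumbbell a b a) v ≤ (univ : Finset ((Fin a ⊕ Fin b) ⊕ Fin a)).card • (2*b) :=
    Finset.sum_le_card_nsmul _ _ _ (fun x _ => dist_le_all hb v x)
  _ = (2*a+b)*(2*b) := by rw [smul_eq_mul, Finset.card_univ, card_V]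

lemma le_transmission (hb : 0 < b) (v : (Fin a ⊕ Fin b) ⊕ Fin a) :
    (b/4)*(b/4) ≤ transmission (dumbbell a b a) v := by
  have h1 : ∑ j : Fin b, (fV a b v - (((j:ℕ):ℤ)+1)).natAbs
      ≤ ∑ j : Fin b, (dumbbell a b a).dist v (.inl (.inr j)) := by
    refine Finset.sum_le_sum fun j _ => ?_
    have := f_dist hb v (.inl (.inr j))
    simpa [fV] using this
  have h2 : (b/4)*(b/4) ≤ ∑ j : Fin b, (fV a b v - (((j:ℕ):ℤ)+1)).natAbs := by
    rw [Fin.sum_univ_eq_sum_range (fun j : ℕ => (fV a b v - ((j:ℤ)+1)).natAbs)]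
    exact arith _ _
  have h3 : ∑ j : Fin b, (dumbbell a b a).dist v (.inl (.inr j))
      ≤ transmission (dumbbell a b a) v := by
    rw [transmission, Fintype.sum_sum_type, Fintype.sum_sum_type]
    omega
  omega


lemma sum_ite_lt (b : ℕ) : ∑ i ∈ Finset.range b, (if i+1 < b then (1:ℕ) else 0) = b - 1 := by
  rw [← Finset.card_filter]
  have : (Finset.range b).filter (fun i => i+1 < b) = Finset.range (b-1) := by
    ext i; simp [Finset.mem_range]; omega
  simp [this]

lemma natcount (b : ℕ) :
    ∑ i ∈ Finset.range b, ∑ j ∈ Finset.range b,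
      ((if i+1 = j then (1:ℕ) else 0) + (if j+1 = i then (1:ℕ) else 0)) = 2*(b-1) := by
  have hA : ∀ i : ℕ, ∑ j ∈ Finset.range b, (if i+1 = j then (1:ℕ) else 0)
      = if i+1 < b then 1 else 0 := by
    intro i
    rw [Finset.sum_ite_eq (Finset.range b) (i+1) (fun _ => (1:ℕ))]
    simp [Finset.mem_range]
  calc ∑ i ∈ Finset.range b, ∑ j ∈ Finset.range b,
      ((if i+1 = j then (1:ℕ) else 0) + (if j+1 = i then (1:ℕ) else 0))
      = (∑ i ∈ Finset.range b, ∑ j ∈ Finset.range b, (if i+1 = j then (1:ℕ) else 0))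
        + ∑ i ∈ Finset.range b, ∑ j ∈ Finset.range b, (if j+1 = i then (1:ℕ) else 0) := by
        rw [← Finset.sum_add_distrib]
        exact Finset.sum_congr rfl fun i _ => by rw [← Finset.sum_add_distrib]
    _ = 2*(b-1) := by
        rw [Finset.sum_comm (s := Finset.range b) (t := Finset.range b)
          (f := fun i j => if j+1 = i then (1:ℕ) else 0)]
        simp_rw [hA, sum_ite_lt]
        omega

lemma sum_ite_eq_fin (x : Fin a) : (∑ y : Fin a, if x = y then (0:ℕ) else 1) = a - 1 := by
  have h1 : (∑ y : Fin a, if x = y then (1:ℕ) else 0) = 1 := by simp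
  have h2 : (∑ y : Fin a, ((if x = y then (0:ℕ) else 1) + (if x = y then (1:ℕ) else 0))) = a := by
    have : ∀ y : Fin a, ((if x = y then (0:ℕ) else 1) + (if x = y then (1:ℕ) else 0)) = 1 := by
      intro y; split_ifs <;> rfl
    simp [this]
  rw [Finset.sum_add_distrib, h1] at h2
  have := x.pos
  omega

lemma sum_ite_val_zero (hb : 0 < b) : (∑ j : Fin b, if (j:ℕ) = 0 then (1:ℕ) else 0) = 1 := by
  rw [Fin.sum_univ_eq_sum_range (fun j => if j = 0 then (1:ℕ) else 0)]
  rw [Finset.sum_ite_eq' (Finset.range b) 0 (fun _ => (1:ℕ))]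
  simp [hb]

lemma sum_ite_val_last (hb : 0 < b) : (∑ j : Fin b, if (j:ℕ) = b-1 then (1:ℕ) else 0) = 1 := by
  rw [Fin.sum_univ_eq_sum_range (fun j => if j = b-1 then (1:ℕ) else 0)]
  rw [Finset.sum_ite_eq' (Finset.range b) (b-1) (fun _ => (1:ℕ))]
  have : b - 1 ∈ Finset.range b := by simp [Finset.mem_range]; omega
  simp [this]

lemma middle_count (hb : 0 < b) :
    (∑ x : Fin b, ∑ y : Fin b,
      if (x:ℕ)+1 = (y:ℕ) ∨ (y:ℕ)+1 = (x:ℕ) then (1:ℕ) else 0) = 2*(b-1) := by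
  have step : ∀ x y : Fin b, (if (x:ℕ)+1 = (y:ℕ) ∨ (y:ℕ)+1 = (x:ℕ) then (1:ℕ) else 0)
      = ((if (x:ℕ)+1 = (y:ℕ) then (1:ℕ) else 0) + (if (y:ℕ)+1 = (x:ℕ) then (1:ℕ) else 0)) := by
    intro x y
    split_ifs <;> omega
  simp_rw [step]
  have inner : ∀ i : ℕ, (∑ y : Fin b, ((if i+1 = (y:ℕ) then (1:ℕ) else 0) + (if (y:ℕ)+1 = i then (1:ℕ) else 0)))
      = ∑ j ∈ Finset.range b, ((if i+1 = j then (1:ℕ) else 0) + (if j+1 = i then (1:ℕ) else 0)) :=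
    fun i => Fin.sum_univ_eq_sum_range (fun j => ((if i+1 = j then (1:ℕ) else 0) + (if j+1 = i then (1:ℕ) else 0))) b
  simp_rw [inner]
  rw [Fin.sum_univ_eq_sum_range (fun i => ∑ j ∈ Finset.range b, ((if i+1 = j then (1:ℕ) else 0) + (if j+1 = i then (1:ℕ) else 0))) b]
  exact natcount b

lemma edge_card (hb : 2 ≤ b) :
    (dumbbell a b a).edgeFinset.card = a^2 + a + (b-1) := by
  have hb0 : 0 < b := by omega
  have h2m := SimpleGraph.sum_degrees_eq_twice_card_edges (dumbbell a b a)
  have hdeg : ∀ v, (dumbbell a b a).degree v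
      = ∑ y, if (dumbbell a b a).Adj v y then 1 else 0 := fun v => by
    rw [SimpleGraph.degree, SimpleGraph.neighborFinset_eq_filter, Finset.card_filter]
  have key : ∑ v, (dumbbell a b a).degree v = 2*(a^2+a+(b-1)) := by
    simp_rw [hdeg]
    rw [Fintype.sum_sum_type, Fintype.sum_sum_type]
    simp_rw [Fintype.sum_sum_type]
    simp only [dumbbell, SimpleGraph.fromRel_adj]
    simp only [ne_eq, Sum.inl.injEq, Sum.inr.injEq, reduceCtorEq, not_false_eq_true, true_and,
      and_true, false_and, and_false, or_false, false_or, true_or, if_true, if_false,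
      Finset.sum_const_zero, ite_not]
    have hiff : ∀ x y : Fin b, ((¬x = y ∧ ((x:ℕ)+1 = (y:ℕ) ∨ (y:ℕ)+1 = (x:ℕ))))
        ↔ (((x:ℕ)+1 = (y:ℕ)) ∨ ((y:ℕ)+1 = (x:ℕ))) := by
      intro x y; simp only [Fin.ext_iff]; omega
    simp only [hiff]
    simp_rw [Finset.sum_add_distrib]
    simp only [middle_count hb0]
    simp only [sum_ite_eq_fin, Finset.sum_const, Finset.card_univ, Fintype.card_fin, smul_eq_mul,
      ← Finset.mul_sum, sum_ite_val_zero hb0, sum_ite_val_last hb0, mul_one, mul_zero,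
      Finset.sum_const_zero, add_zero, zero_add]
    rcases a with _|n
    · simp
    · simp only [Nat.succ_sub_one]
      generalize b - 1 = k
      ring
  rw [key] at h2m
  omega

set_option maxHeartbeats 2000000 in
lemma main_bounds (a b : ℕ) (ha2 : 2 ≤ a) (hb : 8 ≤ b) :
    ((b:ℝ) - 1) / (2 * (2*(a:ℝ) + b)) ≤ sumBalaban (dumbbell a b a) ∧
    sumBalaban (dumbbell a b a) ≤ ((a:ℝ)^2+a+b)^2 / (((a:ℝ)^2 - a + 1) * ((b:ℝ)/4 - 1)) := by
  have hb0 : 0 < b := by omega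
  set G := dumbbell a b a with hG
  have hm : G.edgeFinset.card = a^2 + a + (b-1) := edge_card (by omega)
  have hmr : (G.edgeFinset.card : ℝ) = (a:ℝ)^2 + a + b - 1 := by
    rw [hm]; push_cast [Nat.cast_sub (by omega : 1 ≤ b)]; ring
  have hcard : ((Fintype.card ((Fin a ⊕ Fin b) ⊕ Fin a)) : ℝ) = 2*(a:ℝ) + b := by
    rw [card_V]; push_cast; ring
  have har : (2:ℝ) ≤ a := by exact_mod_cast ha2
  have hbr : (8:ℝ) ≤ b := by exact_mod_cast hb
  have hdenom : (G.edgeFinset.card : ℝ) - (Fintype.card ((Fin a ⊕ Fin b) ⊕ Fin a) : ℝ) + 2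
      = (a:ℝ)^2 - a + 1 := by rw [hmr, hcard]; ring
  have hdpos : 0 < (a:ℝ)^2 - a + 1 := by nlinarith
  set q : ℕ := b/4 with hq
  have hq2 : 2 ≤ q := by omega
  have hqr : (b:ℝ)/4 - 1 ≤ (q:ℝ) := by
    have h4 : b ≤ 4*q + 3 := by omega
    have h4' := (Nat.cast_le (α := ℝ)).mpr h4
    push_cast at h4'
    nlinarith
  have hqrpos : (0:ℝ) < (b:ℝ)/4 - 1 := by linarith
  have hNpos : (0:ℝ) < 2*(2*(a:ℝ)+b) := by linarith
  -- edge term bounds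
  have hterm : ∀ e ∈ G.edgeFinset, 1/(2*(2*(a:ℝ)+b)) ≤ edgeTerm G e ∧ edgeTerm G e ≤ 1/(q:ℝ) := by
    intro e _
    induction e with
    | _ u v =>
      have h1 : edgeTerm G s(u,v) = 1 / Real.sqrt ((transmission G u : ℝ) + transmission G v) := by
        rw [edgeTerm, Sym2.lift_mk]
      have htu1 := transmission_le hb0 u
      have htv1 := transmission_le hb0 v
      have htu2 := le_transmission hb0 u
      have htv2 := le_transmission hb0 v
      have hsum_le : ((transmission G u : ℝ) + transmission G v) ≤ (2*(2*(a:ℝ)+b))^2 := by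
        have h1 : ((transmission G u : ℝ)) ≤ (2*(a:ℝ)+b) * (2*b) := by exact_mod_cast htu1
        have h2 : ((transmission G v : ℝ)) ≤ (2*(a:ℝ)+b) * (2*b) := by exact_mod_cast htv1
        nlinarith [hbr, har]
      have hsum_ge : ((q:ℝ))^2 ≤ ((transmission G u : ℝ) + transmission G v) := by
        have h1 : ((q*q : ℕ) : ℝ) ≤ (transmission G u : ℝ) := by exact_mod_cast htu2
        have h2 : (0:ℝ) ≤ (transmission G v : ℝ) := by positivity
        push_cast at h1
        nlinarith
      have hqrealpos : (0:ℝ) < (q:ℝ) := by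
        have : (2:ℝ) ≤ (q:ℝ) := by exact_mod_cast hq2
        linarith
      have hspos : (0:ℝ) < Real.sqrt ((transmission G u : ℝ) + transmission G v) := by
        apply Real.sqrt_pos.mpr; nlinarith
      constructor
      · rw [h1]
        apply div_le_div_of_nonneg_left (by norm_num) hspos
        calc Real.sqrt ((transmission G u : ℝ) + transmission G v)
            ≤ Real.sqrt ((2*(2*(a:ℝ)+b))^2) := Real.sqrt_le_sqrt hsum_le
          _ = 2*(2*(a:ℝ)+b) := Real.sqrt_sq (by nlinarith)
      · rw [h1]
        apply div_le_div_of_nonneg_left (by norm_num) hqrealpos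
        calc (q:ℝ) = Real.sqrt ((q:ℝ)^2) := (Real.sqrt_sq (le_of_lt hqrealpos)).symm
          _ ≤ _ := Real.sqrt_le_sqrt hsum_ge
  -- sum bounds
  have hsum_lb : (G.edgeFinset.card : ℝ) * (1/(2*(2*(a:ℝ)+b))) ≤ ∑ e ∈ G.edgeFinset, edgeTerm G e := by
    have := Finset.card_nsmul_le_sum G.edgeFinset (edgeTerm G) (1/(2*(2*(a:ℝ)+b)))
      (fun e he => (hterm e he).1)
    simpa [nsmul_eq_mul] using this
  have hsum_ub : ∑ e ∈ G.edgeFinset, edgeTerm G e ≤ (G.edgeFinset.card : ℝ) * (1/(q:ℝ)) := by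
    have := Finset.sum_le_card_nsmul G.edgeFinset (edgeTerm G) (1/(q:ℝ))
      (fun e he => (hterm e he).2)
    simpa [nsmul_eq_mul] using this
  have hsum_pos : 0 ≤ ∑ e ∈ G.edgeFinset, edgeTerm G e := by
    refine Finset.sum_nonneg fun e he => le_trans (le_of_lt ?_) (hterm e he).1
    positivity
  have hSJ : sumBalaban G
      = ((G.edgeFinset.card : ℝ) / ((a:ℝ)^2 - a + 1)) * ∑ e ∈ G.edgeFinset, edgeTerm G e := by
    rw [sumBalaban, hdenom]
  have hP1 : 1 ≤ (G.edgeFinset.card : ℝ) / ((a:ℝ)^2 - a + 1) := by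
    rw [le_div_iff₀ hdpos, one_mul, hmr]; nlinarith
  constructor
  · rw [hSJ]
    calc ((b:ℝ) - 1) / (2 * (2*(a:ℝ) + b)) ≤ (G.edgeFinset.card : ℝ) * (1/(2*(2*(a:ℝ)+b))) := by
          rw [hmr, mul_one_div]
          exact (div_le_div_iff_of_pos_right hNpos).mpr (by nlinarith)
      _ ≤ ∑ e ∈ G.edgeFinset, edgeTerm G e := hsum_lb
      _ ≤ _ := le_mul_of_one_le_left hsum_pos hP1
  · rw [hSJ]
    have hq0 : (0:ℝ) < q := by exact_mod_cast lt_of_lt_of_le two_pos hq2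
    calc ((G.edgeFinset.card : ℝ) / ((a:ℝ)^2 - a + 1)) * ∑ e ∈ G.edgeFinset, edgeTerm G e
        ≤ ((G.edgeFinset.card : ℝ) / ((a:ℝ)^2 - a + 1)) * ((G.edgeFinset.card : ℝ) * (1/(q:ℝ))) := by
          apply mul_le_mul_of_nonneg_left hsum_ub (by positivity)
      _ = ((G.edgeFinset.card : ℝ) * (G.edgeFinset.card : ℝ)) / (((a:ℝ)^2 - a + 1) * q) := by
          field_simp
      _ ≤ ((a:ℝ)^2+a+b)^2 / (((a:ℝ)^2 - a + 1) * ((b:ℝ)/4 - 1)) := by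
          apply div_le_div₀ (by positivity) ?_ (by positivity) ?_
          · rw [hmr]; nlinarith
          · apply mul_le_mul_of_nonneg_left hqr (le_of_lt hdpos)

end DB

open Filter

set_option maxHeartbeats 1600000 in
theorem stmt_16 (c : ℝ) (hc : 0 < c) (a : ℕ → ℕ)
    (ha : Tendsto (fun n : ℕ => (a n : ℝ) / Real.sqrt n) atTop (nhds c)) :
    ∃ C₁ C₂ : ℝ, 0 < C₁ ∧ 0 < C₂ ∧
      ∀ᶠ n : ℕ in atTop,
        C₁ ≤ sumBalaban (dumbbell (a n) (n - 2 * a n) (a n)) ∧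
        sumBalaban (dumbbell (a n) (n - 2 * a n) (a n)) ≤ C₂ := by
  set K : ℝ := 9*c^2/4 + 3*c/8 + 1 with hK
  refine ⟨1/8, 128*K^2/c^2, by norm_num, by positivity, ?_⟩
  set M : ℝ := max (max (4/c) (6*c)) 4 with hM
  have hM0 : 0 ≤ M := le_trans (by norm_num) (le_max_right _ _)
  set N₀ : ℕ := ⌈M^2⌉₊ + 16 with hN₀
  have hE1 : ∀ᶠ n : ℕ in atTop, dist ((a n : ℝ)/Real.sqrt n) c < c/2 :=
    Metric.tendsto_nhds.mp ha _ (by positivity)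
  filter_upwards [hE1, eventually_ge_atTop N₀] with n hd hn
  -- basic facts about n and s = √n
  have hn16 : (16:ℕ) ≤ n := by omega
  have hnr : (16:ℝ) ≤ (n:ℝ) := by exact_mod_cast hn16
  set s : ℝ := Real.sqrt n with hs
  have hs0 : 0 ≤ s := Real.sqrt_nonneg _
  have hs2 : s^2 = (n:ℝ) := Real.sq_sqrt (by positivity)
  have hspos : 0 < s := Real.sqrt_pos.mpr (by linarith)
  have hMs : M ≤ s := by
    have h1 : M^2 ≤ (n:ℝ) := by
      calc M^2 ≤ (⌈M^2⌉₊ : ℝ) := Nat.le_ceil _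
        _ ≤ (N₀ : ℝ) := by exact_mod_cast Nat.le_add_right _ _
        _ ≤ (n:ℝ) := by exact_mod_cast hn
    calc M = Real.sqrt (M^2) := (Real.sqrt_sq hM0).symm
      _ ≤ s := Real.sqrt_le_sqrt h1
  have hs4 : 4 ≤ s := le_trans (le_max_right _ _) hMs
  have hs6c : 6*c ≤ s := le_trans (le_trans (le_max_right _ _) (le_max_left _ _)) hMs
  have hs4c : 4/c ≤ s := le_trans (le_trans (le_max_left _ _) (le_max_left _ _)) hMs
  -- bounds on A = a n
  set A : ℝ := ((a n : ℕ) : ℝ) with hA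
  rw [Real.dist_eq, abs_lt] at hd
  have hA1 : (c/2)*s ≤ A := le_of_lt ((lt_div_iff₀ hspos).mp (by linarith [hd.1]))
  have hA2 : A ≤ (3*c/2)*s := le_of_lt ((div_lt_iff₀ hspos).mp (by linarith [hd.2]))
  have hA0 : 0 ≤ A := by positivity
  have hcs : c*s ≥ 4 := by
    have := mul_le_mul_of_nonneg_left hs4c (le_of_lt hc)
    calc (4:ℝ) = c * (4/c) := by field_simp
      _ ≤ c * s := by exact mul_le_mul_of_nonneg_left hs4c (le_of_lt hc)
  have hA2' : (2:ℝ) ≤ A := by nlinarith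
  have h2An : 2*A ≤ (n:ℝ)/2 := by nlinarith
  have h2Anat : 2 * a n ≤ n := by
    have : (2*(a n) : ℝ) ≤ (n:ℝ) := by push_cast; linarith
    exact_mod_cast this
  set B : ℕ := n - 2 * a n with hBdef
  have hBr : (B:ℝ) = (n:ℝ) - 2*A := by
    rw [hBdef]; push_cast [Nat.cast_sub h2Anat]; ring
  have hBlow : (n:ℝ)/2 ≤ (B:ℝ) := by rw [hBr]; linarith
  have hBnat : 8 ≤ B := by
    have : (8:ℝ) ≤ (B:ℝ) := by linarith
    exact_mod_cast this
  have hAnat : 2 ≤ a n := by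
    have h := hA2'; rw [hA] at h; exact_mod_cast h
  obtain ⟨hlow, hup⟩ := DB.main_bounds (a n) B hAnat hBnat
  constructor
  · refine le_trans ?_ hlow
    have h2AB : 2*A + (B:ℝ) = (n:ℝ) := by rw [hBr]; ring
    rw [h2AB]
    rw [div_le_div_iff₀ (by norm_num) (by linarith)]
    linarith
  · refine le_trans hup ?_
    have hnum : A^2 + A + (B:ℝ) ≤ K * n := by
      have e1 : A^2 ≤ (9*c^2/4) * n := by nlinarith
      have e2 : A ≤ (3*c/8) * n := by nlinarith
      have e3 : (B:ℝ) ≤ n := by rw [hBr]; linarith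
      rw [hK]; nlinarith
    have hd1 : (c^2/8) * n ≤ A^2 - A + 1 := by nlinarith
    have hd2 : (n:ℝ)/16 ≤ (B:ℝ)/4 - 1 := by linarith
    have hKpos : 0 < K := by rw [hK]; positivity
    have hnum0 : 0 ≤ A^2 + A + (B:ℝ) := by positivity
    calc (A^2+A+(B:ℝ))^2 / ((A^2 - A + 1) * ((B:ℝ)/4 - 1))
        ≤ (K*n)^2 / ((c^2/8 * n) * ((n:ℝ)/16)) := by
          apply div_le_div₀ (by positivity) ?_ (by positivity) ?_
          · exact pow_le_pow_left₀ hnum0 hnum 2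
          · have hc8 : (0:ℝ) ≤ c^2/8 * n := by positivity
            exact mul_le_mul hd1 hd2 (by positivity) (by linarith)
      _ = 128*K^2/c^2 := by field_simp; ring
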